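/- (Theorem: stability of the unconventional integrator.) Let n be a positive integer, Δt, Δx > 0, and let L¹, L² ∈ ℝ^{n×n} be the circulant matrices with entries (indices modulo n) L¹_{j,j±1} = 1/2 and L²_{j,j±1} = ±Δt/(2Δx), all other entries zero. Let A ∈ ℝ^{m×m} be symmetric, let X⁰, X¹ ∈ ℝ^{n×r} and W⁰, W¹ ∈ ℝ^{m×r} all have orthonormal columns (X⁰ᵀX⁰ = X¹ᵀX¹ = W⁰ᵀW⁰ = W¹ᵀW¹ = I_r), and let S⁰ ∈ ℝ^{r×r}. Define M = X¹ᵀ X⁰, N = W¹ᵀ W⁰, ū = X¹ M S⁰ Nᵀ W¹ᵀ, and the updated coefficient matrix S¹ = X¹ᵀ(L¹ ū − L² ū Aᵀ) W¹. If the CFL condition λ_max(W¹ᵀ A W¹)·Δt/Δx ≤ 1 holds, then ‖X¹ S¹ W¹ᵀ‖_F ≤ ‖X⁰ S⁰ W⁰ᵀ‖_F; more precisely, with c̃ = λ_max(W¹ᵀ A W¹)·Δt/Δx, ‖X¹ S¹ W¹ᵀ‖_F ≤ (max over α ∈ {1,…,n} of √(cos²(2πα/n) + c̃² sin²(2πα/n)))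 · ‖X⁰ S⁰ W⁰ᵀ‖_F. -/

import Mathlib

open Matrix
open scoped Real

/- Periodic (circulant) Lax-Friedrichs matrices: L¹ has entries 1/2 on the super- and
sub-diagonal (indices modulo n), L² has entries ±Δt/(2Δx) there; all other entries zero. -/

noncomputable def L1 (n : ℕ) [NeZero n] : Matrix (Fin n) (Fin n) ℝ :=
  Matrix.of fun j k => (if k = j + 1 then (1 / 2 : ℝ) else 0) + (if k = j - 1 then (1 / 2 : ℝ) else 0)

noncomputable def L2 (n : ℕ) [NeZero n] (Δt Δx : ℝ) : Matrix (Fin n) (Fin n) ℝ :=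
  Matrix.of fun j k =>
    (if k = j + 1 then Δt / (2 * Δx) else 0) + (if k = j - 1 then -(Δt / (2 * Δx)) else 0)

/- Frobenius norm of a real matrix. -/
noncomputable def frob {n m : ℕ} (M : Matrix (Fin n) (Fin m) ℝ) : ℝ :=
  Real.sqrt (∑ i, ∑ j, (M i j) ^ 2)

/- Spectral norm (largest absolute eigenvalue, for symmetric matrices) of a real matrix:
the operator norm induced by the Euclidean norm. -/
noncomputable def specNorm {m : ℕ} (A : Matrix (Fin m) (Fin m) ℝ) : ℝ :=
  ‖Matrix.toEuclideanCLM (𝕜 := ℝ) A‖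

noncomputable def frobSq {n m : ℕ} (M : Matrix (Fin n) (Fin m) ℝ) : ℝ :=
  ∑ i, ∑ j, (M i j) ^ 2

lemma frobSq_nonneg {n m : ℕ} (M : Matrix (Fin n) (Fin m) ℝ) : 0 ≤ frobSq M :=
  Finset.sum_nonneg fun _ _ => Finset.sum_nonneg fun _ _ => sq_nonneg _

lemma frobSq_eq_trace {n m : ℕ} (M : Matrix (Fin n) (Fin m) ℝ) :
    frobSq M = (Mᵀ * M).trace := by
  unfold frobSq
  simp only [Matrix.trace, Matrix.diag, Matrix.mul_apply, Matrix.transpose_apply, sq]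
  exact Finset.sum_comm

lemma frobSq_transpose {n m : ℕ} (M : Matrix (Fin n) (Fin m) ℝ) :
    frobSq Mᵀ = frobSq M := by
  unfold frobSq
  simp only [Matrix.transpose_apply]
  exact Finset.sum_comm

lemma frobSq_mul_orth_left {n r s : ℕ} (X : Matrix (Fin n) (Fin r) ℝ) (hX : Xᵀ * X = 1)
    (S : Matrix (Fin r) (Fin s) ℝ) : frobSq (X * S) = frobSq S := by
  rw [frobSq_eq_trace, frobSq_eq_trace, Matrix.transpose_mul, Matrix.mul_assoc,
    ← Matrix.mul_assoc Xᵀ X S, hX, Matrix.one_mul]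

lemma frobSq_mul_right_eq {s r t : ℕ} (V : Matrix (Fin r) (Fin t) ℝ) (hV : V * Vᵀ = 1)
    (T : Matrix (Fin s) (Fin r) ℝ) : frobSq (T * V) = frobSq T := by
  rw [frobSq_eq_trace, frobSq_eq_trace, Matrix.transpose_mul, Matrix.mul_assoc,
    ← Matrix.mul_assoc Tᵀ T V, Matrix.trace_mul_comm, Matrix.mul_assoc, hV, Matrix.mul_one]

lemma frobSq_proj_left_le {n r s : ℕ} (X : Matrix (Fin n) (Fin r) ℝ) (hX : Xᵀ * X = 1)
    (T : Matrix (Fin n) (Fin s) ℝ) : frobSq (Xᵀ * T) ≤ frobSq T := by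
  have key : ((1 - X * Xᵀ) * T)ᵀ * ((1 - X * Xᵀ) * T) = Tᵀ * T - (Xᵀ * T)ᵀ * (Xᵀ * T) := by
    have h1 : Xᵀ * (X * (Xᵀ * T)) = Xᵀ * T := by
      rw [← Matrix.mul_assoc, hX, Matrix.one_mul]
    simp only [Matrix.transpose_sub, Matrix.transpose_one, Matrix.transpose_mul,
      Matrix.transpose_transpose, Matrix.sub_mul, Matrix.mul_sub, Matrix.one_mul,
      Matrix.mul_one, Matrix.mul_assoc, h1]
    abel
  have h2 : frobSq ((1 - X * Xᵀ) * T) = frobSq T - frobSq (Xᵀ * T) := by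
    rw [frobSq_eq_trace, frobSq_eq_trace, frobSq_eq_trace, key, Matrix.trace_sub]
  have := frobSq_nonneg ((1 - X * Xᵀ) * T)
  linarith

lemma frobSq_proj_right_le {s m r : ℕ} (W : Matrix (Fin m) (Fin r) ℝ) (hW : Wᵀ * W = 1)
    (T : Matrix (Fin s) (Fin m) ℝ) : frobSq (T * W) ≤ frobSq T := by
  calc frobSq (T * W) = frobSq ((T * W)ᵀ) := (frobSq_transpose _).symm
    _ = frobSq (Wᵀ * Tᵀ) := by rw [Matrix.transpose_mul]
    _ ≤ frobSq Tᵀ := frobSq_proj_left_le W hW Tᵀ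
    _ = frobSq T := frobSq_transpose T

lemma key_col {n : ℕ} [NeZero n] {r : ℕ} (Δt Δx : ℝ) (hΔt : 0 < Δt) (hΔx : 0 < Δx)
    (Z : Matrix (Fin n) (Fin r) ℝ) (d : Fin r → ℝ) (hd : ∀ j, |d j| * Δt / Δx ≤ 1) :
    frobSq (L1 n * Z - L2 n Δt Δx * Z * Matrix.diagonal d) ≤ frobSq Z := by
  unfold frobSq
  rw [Finset.sum_comm, Finset.sum_comm (f := fun i j => (Z i j) ^ 2)]
  apply Finset.sum_le_sum
  intro j _
  set c := d j * Δt / Δx with hc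
  have hc1 : |c| ≤ 1 := by
    rw [hc, abs_div, abs_mul, abs_of_pos hΔt, abs_of_pos hΔx]
    exact hd j
  obtain ⟨hcl, hcr⟩ := abs_le.mp hc1
  have hentry : ∀ i, (L1 n * Z - L2 n Δt Δx * Z * Matrix.diagonal d) i j
      = ((1 - c) / 2) * Z (i + 1) j + ((1 + c) / 2) * Z (i - 1) j := by
    intro i
    rw [Matrix.sub_apply, Matrix.mul_diagonal, Matrix.mul_apply, Matrix.mul_apply]
    simp only [L1, L2, Matrix.of_apply, add_mul, ite_mul, zero_mul, neg_mul,
      Finset.sum_add_distrib, Finset.sum_ite_eq, Finset.sum_ite_eq', Finset.mem_univ, if_true, Finset.sum_neg_distrib]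
    rw [hc]
    field_simp
    ring
  calc ∑ i, ((L1 n * Z - L2 n Δt Δx * Z * Matrix.diagonal d) i j) ^ 2
      = ∑ i, (((1 - c) / 2) * Z (i + 1) j + ((1 + c) / 2) * Z (i - 1) j) ^ 2 := by
        exact Finset.sum_congr rfl fun i _ => by rw [hentry i]
    _ ≤ ∑ i, (((1 - c) / 2) * (Z (i + 1) j) ^ 2 + ((1 + c) / 2) * (Z (i - 1) j) ^ 2) := by
        apply Finset.sum_le_sum
        intro i _
        nlinarith [mul_nonneg (mul_nonneg (by linarith : (0:ℝ) ≤ 1 - c)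
          (by linarith : (0:ℝ) ≤ 1 + c)) (sq_nonneg (Z (i + 1) j - Z (i - 1) j))]
    _ = ((1 - c) / 2) * ∑ i, (Z (i + 1) j) ^ 2 + ((1 + c) / 2) * ∑ i, (Z (i - 1) j) ^ 2 := by
        rw [Finset.sum_add_distrib, Finset.mul_sum, Finset.mul_sum]
    _ = ((1 - c) / 2) * ∑ i, (Z i j) ^ 2 + ((1 + c) / 2) * ∑ i, (Z i j) ^ 2 := by
        congr 1
        · congr 1
          exact Fintype.sum_equiv (Equiv.addRight (1 : Fin n)) _ _ (fun i => rfl)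
        · congr 1
          exact Fintype.sum_equiv (Equiv.subRight (1 : Fin n)) _ _ (fun i => rfl)
    _ = ∑ i, (Z i j) ^ 2 := by ring

lemma frob_eq_sqrt_frobSq {n m : ℕ} (M : Matrix (Fin n) (Fin m) ℝ) :
    frob M = Real.sqrt (frobSq M) := rfl

lemma abs_eigenvalues_le {r : ℕ} (B : Matrix (Fin r) (Fin r) ℝ) (hB : B.IsHermitian)
    (j : Fin r) : |hB.eigenvalues j| ≤ specNorm B := by
  haveI : Nonempty (Fin r) := ⟨j⟩
  have hmem : hB.eigenvalues j ∈ spectrum ℝ B := hB.eigenvalues_mem_spectrum_real j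
  have heq : spectrum ℝ (Matrix.toEuclideanCLM (𝕜 := ℝ) B) = spectrum ℝ B :=
    AlgEquiv.spectrum_eq (Matrix.toEuclideanCLM (𝕜 := ℝ) (n := Fin r)) B
  rw [← heq] at hmem
  have h := spectrum.norm_le_norm_of_mem hmem
  simpa [specNorm, Real.norm_eq_abs] using h


/- Stability of the unconventional (basis-update and Galerkin) integrator applied to the
Lax-Friedrichs discretization, under the CFL condition λ_max(W¹ᵀ A W¹)·Δt/Δx ≤ 1. -/
theorem stmt11 (n m r : ℕ) [NeZero n] (Δt Δx : ℝ) (hΔt : 0 < Δt) (hΔx : 0 < Δx)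
    (A : Matrix (Fin m) (Fin m) ℝ) (hA : A.IsSymm)
    (X0 X1 : Matrix (Fin n) (Fin r) ℝ) (W0 W1 : Matrix (Fin m) (Fin r) ℝ)
    (hX0 : X0ᵀ * X0 = 1) (hX1 : X1ᵀ * X1 = 1) (hW0 : W0ᵀ * W0 = 1) (hW1 : W1ᵀ * W1 = 1)
    (S0 : Matrix (Fin r) (Fin r) ℝ)
    (M N : Matrix (Fin r) (Fin r) ℝ) (hM : M = X1ᵀ * X0) (hN : N = W1ᵀ * W0)
    (ubar : Matrix (Fin n) (Fin m) ℝ) (hubar : ubar = X1 * M * S0 * Nᵀ * W1ᵀ)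
    (S1 : Matrix (Fin r) (Fin r) ℝ)
    (hS1 : S1 = X1ᵀ * (L1 n * ubar - L2 n Δt Δx * ubar * Aᵀ) * W1)
    (ctilde : ℝ) (hctilde : ctilde = specNorm (W1ᵀ * A * W1) * Δt / Δx)
    (hCFL : ctilde ≤ 1) :
    frob (X1 * S1 * W1ᵀ) ≤ frob (X0 * S0 * W0ᵀ) ∧
    frob (X1 * S1 * W1ᵀ)
      ≤ ((Finset.Icc 1 n).sup'
            (Finset.nonempty_Icc.mpr (Nat.one_le_iff_ne_zero.mpr (NeZero.ne n)))
            (fun α : ℕ =>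
              Real.sqrt (Real.cos (2 * π * α / n) ^ 2 + ctilde ^ 2 * Real.sin (2 * π * α / n) ^ 2)))
        * frob (X0 * S0 * W0ᵀ) := by
  have hAeq : Aᵀ = A := hA
  set Ahat := W1ᵀ * A * W1 with hAhatdef
  have hAH : Ahat.IsHermitian := by
    have hA' : A.IsHermitian := by
      rw [Matrix.IsHermitian, Matrix.conjTranspose_eq_transpose_of_trivial]; exact hAeq
    have h := Matrix.isHermitian_conjTranspose_mul_mul W1 hA'
    rwa [Matrix.conjTranspose_eq_transpose_of_trivial] at h
  set U : Matrix (Fin r) (Fin r) ℝ := (hAH.eigenvectorUnitary : Matrix (Fin r) (Fin r) ℝ)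
    with hUdef
  set dg : Fin r → ℝ := hAH.eigenvalues with hdg
  have hU1 : U * Uᵀ = 1 := by
    have h := Matrix.mem_unitaryGroup_iff.mp hAH.eigenvectorUnitary.2
    rwa [Matrix.star_eq_conjTranspose, Matrix.conjTranspose_eq_transpose_of_trivial] at h
  have hU2 : Uᵀ * U = 1 := by
    have h := Matrix.mem_unitaryGroup_iff'.mp hAH.eigenvectorUnitary.2
    rwa [Matrix.star_eq_conjTranspose, Matrix.conjTranspose_eq_transpose_of_trivial] at h
  have hspec : Ahat = U * Matrix.diagonal dg * Uᵀ := by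
    have h := hAH.spectral_theorem
    rw [Unitary.conjStarAlgAut_apply] at h
    rwa [Matrix.star_eq_conjTranspose, Matrix.conjTranspose_eq_transpose_of_trivial,
      RCLike.ofReal_real_eq_id, Function.id_comp] at h
  set C := M * S0 * Nᵀ with hC
  set Y := X1 * C with hY
  have e1 : ubar * W1 = Y := by
    rw [hubar, hY, hC]
    simp only [Matrix.mul_assoc]
    rw [hW1, Matrix.mul_one]
  have e2 : ubar * Aᵀ * W1 = Y * Ahat := by
    rw [hubar, hY, hAhatdef, hAeq, hC]
    simp only [Matrix.mul_assoc]
  have hS1' : S1 = X1ᵀ * (L1 n * Y - L2 n Δt Δx * (Y * Ahat)) := by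
    rw [hS1, Matrix.mul_assoc X1ᵀ _ W1, Matrix.sub_mul, Matrix.mul_assoc (L1 n) ubar W1, e1,
      Matrix.mul_assoc (L2 n Δt Δx) ubar Aᵀ, Matrix.mul_assoc (L2 n Δt Δx) (ubar * Aᵀ) W1,
      e2]
  have hW1' : W1ᵀ * W1ᵀᵀ = 1 := by rw [Matrix.transpose_transpose]; exact hW1
  have hW0' : W0ᵀ * W0ᵀᵀ = 1 := by rw [Matrix.transpose_transpose]; exact hW0
  have step1 : frobSq (X1 * S1 * W1ᵀ) = frobSq S1 := by
    rw [Matrix.mul_assoc, frobSq_mul_orth_left X1 hX1, frobSq_mul_right_eq W1ᵀ hW1' S1]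
  have step0 : frobSq (X0 * S0 * W0ᵀ) = frobSq S0 := by
    rw [Matrix.mul_assoc, frobSq_mul_orth_left X0 hX0, frobSq_mul_right_eq W0ᵀ hW0' S0]
  have t1 : frobSq S1 ≤ frobSq (L1 n * Y - L2 n Δt Δx * (Y * Ahat)) := by
    rw [hS1']; exact frobSq_proj_left_le X1 hX1 _
  have hrw : L1 n * Y - L2 n Δt Δx * (Y * Ahat)
      = (L1 n * (Y * U) - L2 n Δt Δx * (Y * U) * Matrix.diagonal dg) * Uᵀ := by
    rw [hspec, Matrix.sub_mul]
    congr 1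
    · rw [Matrix.mul_assoc (L1 n) (Y * U) Uᵀ, Matrix.mul_assoc Y U Uᵀ, hU1, Matrix.mul_one]
    · simp only [Matrix.mul_assoc]
  have t2 : frobSq (L1 n * Y - L2 n Δt Δx * (Y * Ahat))
      = frobSq (L1 n * (Y * U) - L2 n Δt Δx * (Y * U) * Matrix.diagonal dg) := by
    rw [hrw]
    exact frobSq_mul_right_eq Uᵀ (by rw [Matrix.transpose_transpose]; exact hU2) _
  have hdle : ∀ j, |dg j| * Δt / Δx ≤ 1 := by
    intro j
    have h1 : |dg j| ≤ specNorm Ahat := abs_eigenvalues_le Ahat hAH j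
    have h2 : |dg j| * Δt / Δx ≤ specNorm Ahat * Δt / Δx := by gcongr
    calc |dg j| * Δt / Δx ≤ specNorm Ahat * Δt / Δx := h2
      _ = ctilde := by rw [hctilde]
      _ ≤ 1 := hCFL
  have t3 : frobSq (L1 n * (Y * U) - L2 n Δt Δx * (Y * U) * Matrix.diagonal dg)
      ≤ frobSq (Y * U) := key_col Δt Δx hΔt hΔx (Y * U) dg hdle
  have t4 : frobSq (Y * U) = frobSq Y := frobSq_mul_right_eq U hU1 Y
  have t5 : frobSq Y = frobSq C := frobSq_mul_orth_left X1 hX1 C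
  have hCeq : C = X1ᵀ * (X0 * S0 * W0ᵀ * W1) := by
    rw [hC, hM, hN]
    simp only [Matrix.transpose_mul, Matrix.transpose_transpose, Matrix.mul_assoc]
  have t6 : frobSq C ≤ frobSq S0 := by
    calc frobSq C ≤ frobSq (X0 * S0 * W0ᵀ * W1) := by
          rw [hCeq]; exact frobSq_proj_left_le X1 hX1 _
      _ ≤ frobSq (X0 * S0 * W0ᵀ) := frobSq_proj_right_le W1 hW1 _
      _ = frobSq S0 := step0
  have main : frobSq (X1 * S1 * W1ᵀ) ≤ frobSq (X0 * S0 * W0ᵀ) := by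
    rw [step1, step0]; linarith
  have first : frob (X1 * S1 * W1ᵀ) ≤ frob (X0 * S0 * W0ᵀ) := by
    rw [frob_eq_sqrt_frobSq, frob_eq_sqrt_frobSq]
    exact Real.sqrt_le_sqrt main
  refine ⟨first, ?_⟩
  have hnIcc : n ∈ Finset.Icc 1 n :=
    Finset.mem_Icc.mpr ⟨Nat.one_le_iff_ne_zero.mpr (NeZero.ne n), le_refl n⟩
  have hne : (n : ℝ) ≠ 0 := Nat.cast_ne_zero.mpr (NeZero.ne n)
  have hfn : Real.sqrt (Real.cos (2 * π * n / n) ^ 2 + ctilde ^ 2 * Real.sin (2 * π * n / n) ^ 2)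
      = 1 := by
    rw [show (2 * π * n / n : ℝ) = 2 * π by field_simp, Real.cos_two_pi, Real.sin_two_pi]
    norm_num
  have hsup : (1 : ℝ) ≤ (Finset.Icc 1 n).sup'
      (Finset.nonempty_Icc.mpr (Nat.one_le_iff_ne_zero.mpr (NeZero.ne n)))
      (fun α : ℕ =>
        Real.sqrt (Real.cos (2 * π * α / n) ^ 2 + ctilde ^ 2 * Real.sin (2 * π * α / n) ^ 2)) := by
    rw [← hfn]
    exact Finset.le_sup' (fun α : ℕ =>
      Real.sqrt (Real.cos (2 * π * α / n) ^ 2 + ctilde ^ 2 * Real.sin (2 * π * α / n) ^ 2)) hnIcc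
  have hnn : 0 ≤ frob (X0 * S0 * W0ᵀ) := Real.sqrt_nonneg _
  calc frob (X1 * S1 * W1ᵀ) ≤ frob (X0 * S0 * W0ᵀ) := first
    _ = 1 * frob (X0 * S0 * W0ᵀ) := by rw [one_mul]
    _ ≤ _ := mul_le_mul_of_nonneg_right hsup hnn
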